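/- A subalgebra U of a finite-dimensional Lie algebra L is intravariant in L if and only if for every Lie algebra L* containing L as an ideal, L* = L + N_{L*}(U), where N_{L*}(U) denotes the normalizer of U in L*. -/

import Mathlib

universe u

/-- A subalgebra `U` of `L` is intravariant if every derivation of `L` is expressible as the
sum of an inner derivation and a derivation which stabilises `U`. -/
def IsIntravariant (𝕜 L : Type u) [Field 𝕜] [LieRing L] [LieAlgebra 𝕜 L]
    (U : LieSubalgebra 𝕜 L) : Prop :=
  ∀ d : LieDerivation 𝕜 L L, ∃ (x : L) (e : LieDerivation 𝕜 L L),
    d = LieDerivation.ad 𝕜 L x + e ∧ ∀ u ∈ U, e u ∈ U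

set_option maxRecDepth 4000

variable {𝕜 L : Type u} [Field 𝕜] [LieRing L] [LieAlgebra 𝕜 L]

def SD (𝕜 L : Type u) [Field 𝕜] [LieRing L] [LieAlgebra 𝕜 L]
    (_d : LieDerivation 𝕜 L L) : Type u := L × 𝕜

namespace SD
variable {d : LieDerivation 𝕜 L L}

instance : AddCommGroup (SD 𝕜 L d) := inferInstanceAs (AddCommGroup (L × 𝕜))
instance : Module 𝕜 (SD 𝕜 L d) := inferInstanceAs (Module 𝕜 (L × 𝕜))
instance [FiniteDimensional 𝕜 L] : FiniteDimensional 𝕜 (SD 𝕜 L d) :=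
  inferInstanceAs (FiniteDimensional 𝕜 (L × 𝕜))

instance : LieRing (SD 𝕜 L d) where
  bracket x y := (⁅x.1, y.1⁆ + x.2 • d y.1 - y.2 • d x.1, (0 : 𝕜))
  add_lie x y z := by
    show Prod.mk _ _ = Prod.mk _ _ + Prod.mk _ _
    ext
    · show ⁅x.1 + y.1, z.1⁆ + (x.2 + y.2) • d z.1 - z.2 • d (x.1 + y.1) =
        (⁅x.1, z.1⁆ + x.2 • d z.1 - z.2 • d x.1) + (⁅y.1, z.1⁆ + y.2 • d z.1 - z.2 • d y.1)
      simp [add_lie, add_smul, smul_add]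
      abel
    · show (0:𝕜) = 0 + 0; simp
  lie_add x y z := by
    show Prod.mk _ _ = Prod.mk _ _ + Prod.mk _ _
    ext
    · show ⁅x.1, y.1 + z.1⁆ + x.2 • d (y.1 + z.1) - (y.2 + z.2) • d x.1 =
        (⁅x.1, y.1⁆ + x.2 • d y.1 - y.2 • d x.1) + (⁅x.1, z.1⁆ + x.2 • d z.1 - z.2 • d x.1)
      simp [lie_add, add_smul, smul_add]
      abel
    · show (0:𝕜) = 0 + 0; simp
  lie_self x := by
    show Prod.mk _ _ = (0 : SD 𝕜 L d)
    ext
    · show ⁅x.1, x.1⁆ + x.2 • d x.1 - x.2 • d x.1 = 0; simp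
    · rfl
  leibniz_lie x y z := by
    show Prod.mk _ _ = Prod.mk _ _ + Prod.mk _ _
    ext
    · show ⁅x.1, ⁅y.1, z.1⁆ + y.2 • d z.1 - z.2 • d y.1⁆
          + x.2 • d (⁅y.1, z.1⁆ + y.2 • d z.1 - z.2 • d y.1) - (0:𝕜) • d x.1 = _
      show _ = (⁅⁅x.1,y.1⁆ + x.2 • d y.1 - y.2 • d x.1, z.1⁆
          + (0:𝕜) • d z.1 - z.2 • d (⁅x.1,y.1⁆ + x.2 • d y.1 - y.2 • d x.1))
          + (⁅y.1, ⁅x.1,z.1⁆ + x.2 • d z.1 - z.2 • d x.1⁆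
          + y.2 • d (⁅x.1,z.1⁆ + x.2 • d z.1 - z.2 • d x.1) - (0:𝕜) • d y.1)
      simp only [lie_add, lie_sub, add_lie, sub_lie, lie_smul, smul_lie, map_add, map_sub,
        map_smul, zero_smul, sub_zero, LieDerivation.apply_lie_eq_add,
        ← lie_skew (d x.1) y.1, ← lie_skew (d y.1) x.1]
      rw [leibniz_lie x.1 y.1 z.1]
      module
    · show (0:𝕜) = 0 + 0; simp

instance : LieAlgebra 𝕜 (SD 𝕜 L d) where
  lie_smul t x y := by
    show Prod.mk _ _ = t • Prod.mk _ _
    have : (t • y : SD 𝕜 L d).1 = t • y.1 := rfl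
    ext
    · show ⁅x.1, (t • y : SD 𝕜 L d).1⁆ + x.2 • d (t • y : SD 𝕜 L d).1
          - (t • y : SD 𝕜 L d).2 • d x.1 = t • (⁅x.1, y.1⁆ + x.2 • d y.1 - y.2 • d x.1)
      show ⁅x.1, t • y.1⁆ + x.2 • d (t • y.1) - (t * y.2) • d x.1 = _
      simp [lie_smul, smul_smul, smul_sub, smul_add, mul_comm]
    · show (0:𝕜) = t • 0; simp

def inl (𝕜 L : Type u) [Field 𝕜] [LieRing L] [LieAlgebra 𝕜 L]
    (d : LieDerivation 𝕜 L L) : L →ₗ⁅𝕜⁆ SD 𝕜 L d where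
  toFun x := (x, 0)
  map_add' x y := by show Prod.mk _ _ = Prod.mk _ _ + Prod.mk _ _; ext <;> [rfl; exact (add_zero (0:𝕜)).symm]
  map_smul' t x := by show Prod.mk _ _ = t • Prod.mk _ _; ext <;> [rfl; exact (smul_zero t).symm]
  map_lie' {x y} := by
    show Prod.mk _ _ = Prod.mk _ _
    ext
    · show ⁅x, y⁆ = ⁅x, y⁆ + (0:𝕜) • d y - (0:𝕜) • d x
      simp
    · rfl

end SD

theorem mem_sup_of_ideal {L' : Type u} [LieRing L'] [LieAlgebra 𝕜 L']
    (M N : LieSubalgebra 𝕜 L') (hM : ∀ x y : L', y ∈ M → ⁅x, y⁆ ∈ M)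
    {z : L'} (hz : z ∈ M ⊔ N) : ∃ m ∈ M, ∃ n ∈ N, z = m + n := by
  let P : LieSubalgebra 𝕜 L' :=
    { __ := (M.toSubmodule ⊔ N.toSubmodule : Submodule 𝕜 L')
      lie_mem' := by
        intro x y hx hy
        obtain ⟨m1, hm1, n1, hn1, rfl⟩ := Submodule.mem_sup.mp hx
        obtain ⟨m2, hm2, n2, hn2, rfl⟩ := Submodule.mem_sup.mp hy
        have h1 : ⁅m1 + n1, m2⁆ ∈ M := hM _ _ hm2
        have h2 : ⁅m1, n2⁆ ∈ M := by
          rw [← lie_skew]; exact neg_mem (hM _ _ hm1)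
        have h3 : ⁅n1, n2⁆ ∈ N := N.lie_mem hn1 hn2
        have : ⁅m1 + n1, m2 + n2⁆ = ⁅m1 + n1, m2⁆ + ⁅m1, n2⁆ + ⁅n1, n2⁆ := by
          simp only [lie_add, add_lie]; abel
        rw [this]
        exact Submodule.add_mem _ (Submodule.add_mem _ (Submodule.mem_sup_left h1)
          (Submodule.mem_sup_left h2)) (Submodule.mem_sup_right h3) }
  have hle : M ⊔ N ≤ P := by
    apply sup_le
    · intro x hx; exact Submodule.mem_sup_left hx
    · intro x hx; exact Submodule.mem_sup_right hx
  obtain ⟨m, hm, n, hn, h⟩ := Submodule.mem_sup.mp (hle hz)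
  exact ⟨m, hm, n, hn, h.symm⟩


/-- A subalgebra `U` of a finite-dimensional Lie algebra `L` is intravariant in `L` if and only
if for every Lie algebra `L*` containing `L` as an ideal, `L* = L + N_{L*}(U)`. -/
theorem intravariant_iff_normalizer_sup_eq_top
    (𝕜 : Type u) [Field 𝕜] (L : Type u) [LieRing L] [LieAlgebra 𝕜 L] [FiniteDimensional 𝕜 L]
    (U : LieSubalgebra 𝕜 L) :
    IsIntravariant 𝕜 L U ↔
      ∀ (L' : Type u) [LieRing L'] [LieAlgebra 𝕜 L'] [FiniteDimensional 𝕜 L']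
        (f : L →ₗ⁅𝕜⁆ L'), Function.Injective f →
          (∀ x y : L', y ∈ f.range → ⁅x, y⁆ ∈ f.range) →
          f.range ⊔ (U.map f).normalizer = ⊤ := by
  constructor
  · intro h L' _ _ _ f hf hideal
    rw [eq_top_iff]
    intro x _
    have hf' : Function.Injective f.toLinearMap := hf
    let e := LinearEquiv.ofInjective f.toLinearMap hf'
    have hmem : ∀ z : L, ⁅x, f z⁆ ∈ LinearMap.range f.toLinearMap := by
      intro z
      obtain ⟨w, hw⟩ := (f.mem_range _).mp (hideal x (f z) ⟨z, rfl⟩)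
      exact ⟨w, hw⟩
    let g0 : L →ₗ[𝕜] LinearMap.range f.toLinearMap :=
      LinearMap.codRestrict _ (((LieAlgebra.ad 𝕜 L') x) ∘ₗ f.toLinearMap) hmem
    let g : L →ₗ[𝕜] L := e.symm.toLinearMap ∘ₗ g0
    have key : ∀ z : L, f (g z) = ⁅x, f z⁆ := by
      intro z
      show f.toLinearMap (e.symm (g0 z)) = ⁅x, f z⁆
      rw [LinearEquiv.ofInjective_symm_apply]
      rfl
    let D : LieDerivation 𝕜 L L :=
      { toLinearMap := g
        leibniz' := by
          intro a b
          apply hf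
          rw [map_sub, LieHom.map_lie, LieHom.map_lie, key, key, key, LieHom.map_lie,
            leibniz_lie, ← lie_skew (f b) ⁅x, f a⁆]
          abel }
    obtain ⟨y, ε, hde, hU⟩ := h D
    have hn : x - f y ∈ (U.map f).normalizer := by
      rw [LieSubalgebra.mem_normalizer_iff]
      intro v hv
      obtain ⟨u, hu, rfl⟩ := (LieSubalgebra.mem_map _ _ _).mp hv
      have hDu : D u = ⁅y, u⁆ + ε u := by
        rw [hde]
        simp [LieDerivation.coe_ad_apply_eq_ad_apply]
      have : ⁅x - f y, f u⁆ = f (ε u) := by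
        rw [sub_lie, ← LieHom.map_lie, ← key]
        show f (D u) - f ⁅y, u⁆ = f (ε u)
        rw [hDu, map_add, LieHom.map_lie]
        abel
      rw [this]
      exact (LieSubalgebra.mem_map _ _ _).mpr ⟨ε u, hU u hu, rfl⟩
    have hx : x = f y + (x - f y) := by abel
    rw [hx]
    exact add_mem (le_sup_left (α := LieSubalgebra 𝕜 L') (f.mem_range_self y))
      (le_sup_right (α := LieSubalgebra 𝕜 L') hn)
  · intro h d
    have hid : ∀ x y : SD 𝕜 L d, y ∈ (SD.inl 𝕜 L d).range → ⁅x, y⁆ ∈ (SD.inl 𝕜 L d).range := by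
      intro x y hy
      obtain ⟨z, rfl⟩ := ((SD.inl 𝕜 L d).mem_range y).mp hy
      exact ((SD.inl 𝕜 L d).mem_range _).mpr ⟨⁅x.1, z⁆ + x.2 • d z - (0:𝕜) • d x.1, rfl⟩
    have hsup := h (SD 𝕜 L d) (SD.inl 𝕜 L d) (fun a b hab => congrArg Prod.fst hab) hid
    let z0 : SD 𝕜 L d := ((0 : L), (1 : 𝕜))
    have hz : z0 ∈ (SD.inl 𝕜 L d).range ⊔ (U.map (SD.inl 𝕜 L d)).normalizer := by
      rw [hsup]; exact LieSubalgebra.mem_top _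
    obtain ⟨m, hm, n, hn, hzmn⟩ := mem_sup_of_ideal _ _ hid hz
    obtain ⟨y, rfl⟩ := ((SD.inl 𝕜 L d).mem_range m).mp hm
    refine ⟨y, d - LieDerivation.ad 𝕜 L y, by abel, ?_⟩
    intro u hu
    have hnu : ⁅n, SD.inl 𝕜 L d u⁆ ∈ U.map (SD.inl 𝕜 L d) :=
      (LieSubalgebra.mem_normalizer_iff _ _).mp hn _
        ((LieSubalgebra.mem_map _ _ _).mpr ⟨u, hu, rfl⟩)
    obtain ⟨u', hu', hu'eq⟩ := (LieSubalgebra.mem_map _ _ _).mp hnu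
    have hndef : n = z0 - SD.inl 𝕜 L d y := by rw [hzmn]; abel
    have hn1 : n.1 = -y := by rw [hndef]; show (0 : L) - y = -y; simp
    have hn2 : n.2 = 1 := by rw [hndef]; show (1 : 𝕜) - 0 = 1; simp
    have hfst : u' = ⁅n.1, u⁆ + n.2 • d u - (0:𝕜) • d n.1 := congrArg Prod.fst hu'eq
    have : (d - LieDerivation.ad 𝕜 L y) u = u' := by
      rw [hfst, hn1, hn2]
      rw [LieDerivation.sub_apply]
      have had : ((LieDerivation.ad 𝕜 L) y) u = ⁅y, u⁆ := by
        simp [LieDerivation.coe_ad_apply_eq_ad_apply]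
      rw [had]
      simp only [one_smul, zero_smul, sub_zero, neg_lie]
      abel
    rw [this]
    exact hu'
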